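/- The Demazure–Lusztig operators T_i on Q(q,t)[x_1^{±1},...,x_n^{±1}] satisfy the braid relations: T_i T_{i+1} T_i = T_{i+1} T_i T_{i+1} for 1 ≤ i ≤ n−2, and T_i T_j = T_j T_i for |i−j| > 1. -/

import Mathlib

set_option maxHeartbeats 1600000
set_option synthInstance.maxHeartbeats 1000000

noncomputable section

/-- The field `ℚ(q,t)`. -/
abbrev Qqt : Type := RatFunc (RatFunc ℚ)

/-- The variable `t` of `ℚ(q,t)`. -/
noncomputable def tt : Qqt := RatFunc.X

/-- The field of fractions of `ℚ(q,t)[x_1,…,x_n]`, containing the Laurent polynomial ring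
`ℚ(q,t)[x_1^{±1},…,x_n^{±1}]`. -/
abbrev KK (n : ℕ) : Type := FractionRing (MvPolynomial (Fin n) Qqt)

/-- The variable `x_i` inside the fraction field. -/
noncomputable def xv {n : ℕ} (i : Fin n) : KK n :=
  algebraMap (MvPolynomial (Fin n) Qqt) (KK n) (MvPolynomial.X i)

/-- The image of a scalar `c ∈ ℚ(q,t)` inside the fraction field. -/
noncomputable def cv {n : ℕ} (c : Qqt) : KK n :=
  algebraMap (MvPolynomial (Fin n) Qqt) (KK n) (MvPolynomial.C c)

/-- The operator `s_i` swapping the variables `x_i` and `x_{i+1}`. -/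
noncomputable def sOp {n : ℕ} (i : ℕ) (h : i + 1 < n) : KK n ≃+* KK n :=
  IsFractionRing.ringEquivOfRingEquiv
    (MvPolynomial.renameEquiv Qqt
      (Equiv.swap (⟨i, Nat.lt_of_succ_lt h⟩ : Fin n) ⟨i + 1, h⟩)).toRingEquiv

/-- The Demazure–Lusztig operator
`T_i f = s_i f + (1−t) x_i (f − s_i f)/(x_i − x_{i+1})`. -/
noncomputable def TOp {n : ℕ} (i : ℕ) (h : i + 1 < n) (f : KK n) : KK n :=
  sOp i h f + (1 - cv tt) * xv (⟨i, Nat.lt_of_succ_lt h⟩ : Fin n) * (f - sOp i h f) /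
    (xv (⟨i, Nat.lt_of_succ_lt h⟩ : Fin n) - xv (⟨i + 1, h⟩ : Fin n))

namespace DLAux

private lemma step1 {K : Type*} [Field K] (p q eb d1 d2 d3 : K)
    (h1 : d1 ≠ 0) (h2 : d2 ≠ 0) (h3 : d3 ≠ 0) :
    q / d3 + eb * (p / d1 - q / d3) / d2 =
      (q * d1 * d2 + eb * (p * d3 - q * d1)) / (d1 * d2 * d3) := by
  field_simp

private lemma step2 {K : Type*} [Field K] (p q ea d1 d2 d3 : K)
    (h1 : d1 ≠ 0) (h2 : d2 ≠ 0) (h3 : d3 ≠ 0) :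
    q / -(d1 * d2 * d3) + ea * (p / (d1 * d2 * d3) - q / -(d1 * d2 * d3)) / d1 =
      (-q * d1 + ea * (p + q)) / (d1 * d1 * d2 * d3) := by
  have hD : d1 * d2 * d3 ≠ 0 := mul_ne_zero (mul_ne_zero h1 h2) h3
  rw [div_neg, sub_neg_eq_add, ← add_div, ← mul_div_assoc, div_div, ← neg_div,
    div_add_div _ _ hD (mul_ne_zero hD h1),
    div_eq_div_iff (mul_ne_zero hD (mul_ne_zero hD h1))
      (mul_ne_zero (mul_ne_zero (mul_ne_zero h1 h1) h2) h3)]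
  ring

private lemma step3 {K : Type*} [Field K] (p q ea d1 d2 d3 : K)
    (h1 : d1 ≠ 0) (h2 : d2 ≠ 0) (h3 : d3 ≠ 0) :
    q / d3 + ea * (p / d2 - q / d3) / d1 =
      (q * d1 * d2 + ea * (p * d3 - q * d2)) / (d1 * d2 * d3) := by
  field_simp

private lemma step4 {K : Type*} [Field K] (p q eb d1 d2 d3 : K)
    (h1 : d1 ≠ 0) (h2 : d2 ≠ 0) (h3 : d3 ≠ 0) :
    q / -(d1 * d2 * d3) + eb * (p / (d1 * d2 * d3) - q / -(d1 * d2 * d3)) / d2 =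
      (-q * d2 + eb * (p + q)) / (d1 * d2 * d2 * d3) := by
  have hD : d1 * d2 * d3 ≠ 0 := mul_ne_zero (mul_ne_zero h1 h2) h3
  rw [div_neg, sub_neg_eq_add, ← add_div, ← mul_div_assoc, div_div, ← neg_div,
    div_add_div _ _ hD (mul_ne_zero hD h2),
    div_eq_div_iff (mul_ne_zero hD (mul_ne_zero hD h2))
      (mul_ne_zero (mul_ne_zero (mul_ne_zero h1 h2) h2) h3)]
  ring

lemma braid_key {K : Type*} [Field K] (s u : K ≃+* K) (a b c t : K)
    (hsa : s a = b) (hsb : s b = a) (hsc : s c = c)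
    (hua : u a = a) (hub : u b = c) (huc : u c = b)
    (hst : s t = t) (hut : u t = t)
    (hab : a ≠ b) (hbc : b ≠ c) (hac : a ≠ c)
    (hss : ∀ x, s (s x) = x) (huu : ∀ x, u (u x) = x)
    (f : K) (hbraid : s (u (s f)) = u (s (u f)))
    (T1 T2 : K → K)
    (hT1 : ∀ g, T1 g = s g + (1 - t) * a * (g - s g) / (a - b))
    (hT2 : ∀ g, T2 g = u g + (1 - t) * b * (g - u g) / (b - c)) :
    T1 (T2 (T1 f)) = T2 (T1 (T2 f)) := by
  have h1 : a - b ≠ 0 := sub_ne_zero.mpr hab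
  have h2 : b - c ≠ 0 := sub_ne_zero.mpr hbc
  have h3 : a - c ≠ 0 := sub_ne_zero.mpr hac
  set e := 1 - t with he
  set N1 := s f * (a - b) + e * a * (f - s f) with hN1
  set N2 := u N1 * (a - b) * (b - c) + e * b * (N1 * (a - c) - u N1 * (a - b)) with hN2
  set M1 := u f * (b - c) + e * b * (f - u f) with hM1
  set M2 := s M1 * (a - b) * (b - c) + e * a * (M1 * (a - c) - s M1 * (b - c)) with hM2
  have hse : s e = e := by rw [he, map_sub, map_one, hst]
  have hue : u e = e := by rw [he, map_sub, map_one, hut]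
  have hsden : s ((a - b) * (b - c) * (a - c)) = -((a - b) * (b - c) * (a - c)) := by
    simp only [map_mul, map_sub, hsa, hsb, hsc]; ring
  have huden : u ((a - b) * (b - c) * (a - c)) = -((a - b) * (b - c) * (a - c)) := by
    simp only [map_mul, map_sub, hua, hub, huc]; ring
  have hg1 : T1 f = N1 / (a - b) := by rw [hT1, add_div' _ _ _ h1]
  have hg2 : T2 (T1 f) = N2 / ((a - b) * (b - c) * (a - c)) := by
    have hud1 : u (a - b) = a - c := by rw [map_sub, hua, hub]
    rw [hT2, hg1, map_div₀, hud1, step1 _ _ _ _ _ _ h1 h2 h3]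
  have hg3 : T1 (T2 (T1 f)) =
      (-s N2 * (a - b) + e * a * (N2 + s N2)) / ((a - b) * (a - b) * (b - c) * (a - c)) := by
    rw [hT1, hg2, map_div₀, hsden, step2 _ _ _ _ _ _ h1 h2 h3]
  have hk1 : T2 f = M1 / (b - c) := by rw [hT2, add_div' _ _ _ h2]
  have hk2 : T1 (T2 f) = M2 / ((a - b) * (b - c) * (a - c)) := by
    have hsd2 : s (b - c) = a - c := by rw [map_sub, hsb, hsc]
    rw [hT1, hk1, map_div₀, hsd2, step3 _ _ _ _ _ _ h1 h2 h3]
  have hk3 : T2 (T1 (T2 f)) =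
      (-u M2 * (b - c) + e * b * (M2 + u M2)) / ((a - b) * (b - c) * (b - c) * (a - c)) := by
    rw [hT2, hk2, map_div₀, huden, step4 _ _ _ _ _ _ h1 h2 h3]
  rw [hg3, hk3, div_eq_div_iff
    (mul_ne_zero (mul_ne_zero (mul_ne_zero h1 h1) h2) h3)
    (mul_ne_zero (mul_ne_zero (mul_ne_zero h1 h2) h2) h3)]
  simp only [hN2, hM2, hN1, hM1, map_add, map_sub, map_mul, map_neg,
    hsa, hsb, hsc, hua, hub, huc, hse, hue, hss, huu]
  rw [hbraid]
  ring

lemma comm_key {K : Type*} [Field K] (s u : K ≃+* K) (a b c d t : K)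
    (hsa : s a = b) (hsb : s b = a) (hsc : s c = c) (hsd : s d = d)
    (hua : u a = a) (hub : u b = b) (huc : u c = d) (hud : u d = c)
    (hst : s t = t) (hut : u t = t)
    (hab : a ≠ b) (hcd : c ≠ d)
    (f : K) (hcomm : s (u f) = u (s f))
    (T1 T2 : K → K)
    (hT1 : ∀ g, T1 g = s g + (1 - t) * a * (g - s g) / (a - b))
    (hT2 : ∀ g, T2 g = u g + (1 - t) * c * (g - u g) / (c - d)) :
    T1 (T2 f) = T2 (T1 f) := by
  have h1 : a - b ≠ 0 := sub_ne_zero.mpr hab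
  have h2 : c - d ≠ 0 := sub_ne_zero.mpr hcd
  simp only [hT1, hT2, map_add, map_sub, map_mul, map_div₀, map_one,
    hsa, hsb, hsc, hsd, hua, hub, huc, hud, hst, hut]
  rw [hcomm]
  field_simp
  ring

/-- The operator on the fraction field induced by a permutation of the variables. -/
noncomputable def Sop {n : ℕ} (e : Equiv.Perm (Fin n)) : KK n ≃+* KK n :=
  IsFractionRing.ringEquivOfRingEquiv (MvPolynomial.renameEquiv Qqt e).toRingEquiv

lemma sOp_eq {n : ℕ} (i : ℕ) (h : i + 1 < n) :
    sOp i h = Sop (Equiv.swap (⟨i, Nat.lt_of_succ_lt h⟩ : Fin n) ⟨i + 1, h⟩) := rfl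

lemma Sop_algebraMap {n : ℕ} (e : Equiv.Perm (Fin n)) (p : MvPolynomial (Fin n) Qqt) :
    Sop e (algebraMap (MvPolynomial (Fin n) Qqt) (KK n) p) =
      algebraMap (MvPolynomial (Fin n) Qqt) (KK n) (MvPolynomial.rename e p) := by
  simp [Sop]

lemma Sop_comp {n : ℕ} (e₁ e₂ : Equiv.Perm (Fin n)) (x : KK n) :
    Sop e₁ (Sop e₂ x) = Sop (e₂.trans e₁) x := by
  have h : ((Sop e₁ : KK n ≃+* KK n) : KK n →+* KK n).comp
      ((Sop e₂ : KK n ≃+* KK n) : KK n →+* KK n) =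
      ((Sop (e₂.trans e₁) : KK n ≃+* KK n) : KK n →+* KK n) := by
    apply IsLocalization.ringHom_ext (nonZeroDivisors (MvPolynomial (Fin n) Qqt))
    refine RingHom.ext fun p => ?_
    simp only [RingHom.coe_comp, Function.comp_apply, RingEquiv.coe_toRingHom,
      Sop_algebraMap, MvPolynomial.rename_rename, Equiv.coe_trans]
  exact RingHom.congr_fun h x

lemma Sop_refl {n : ℕ} (x : KK n) : Sop (Equiv.refl (Fin n)) x = x := by
  have h : ((Sop (Equiv.refl (Fin n)) : KK n ≃+* KK n) : KK n →+* KK n) =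
      RingHom.id (KK n) := by
    apply IsLocalization.ringHom_ext (nonZeroDivisors (MvPolynomial (Fin n) Qqt))
    refine RingHom.ext fun p => ?_
    simp only [RingHom.coe_comp, Function.comp_apply, RingEquiv.coe_toRingHom,
      Sop_algebraMap, Equiv.coe_refl, MvPolynomial.rename_id, AlgHom.id_apply, RingHom.id_apply,
      RingHomCompTriple.comp_apply]
  exact RingHom.congr_fun h x

lemma Sop_xv {n : ℕ} (e : Equiv.Perm (Fin n)) (j : Fin n) : Sop e (xv j) = xv (e j) := by
  simp [xv, Sop_algebraMap]

lemma Sop_cv {n : ℕ} (e : Equiv.Perm (Fin n)) (c : Qqt) : Sop e (cv c) = cv c := by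
  simp [cv, Sop_algebraMap]

lemma xv_ne {n : ℕ} {i j : Fin n} (h : i ≠ j) : xv i ≠ xv j := by
  intro hc
  exact h (MvPolynomial.X_injective
    (IsFractionRing.injective (MvPolynomial (Fin n) Qqt) (KK n) hc))

lemma sOp_invol {n : ℕ} (i : ℕ) (h : i + 1 < n) (x : KK n) : sOp i h (sOp i h x) = x := by
  rw [sOp_eq, Sop_comp, Equiv.swap_swap, Sop_refl]

lemma sOp_x_left {n : ℕ} (i : ℕ) (h : i + 1 < n) :
    sOp i h (xv (⟨i, Nat.lt_of_succ_lt h⟩ : Fin n)) = xv (⟨i + 1, h⟩ : Fin n) := by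
  rw [sOp_eq, Sop_xv, Equiv.swap_apply_left]

lemma sOp_x_right {n : ℕ} (i : ℕ) (h : i + 1 < n) :
    sOp i h (xv (⟨i + 1, h⟩ : Fin n)) = xv (⟨i, Nat.lt_of_succ_lt h⟩ : Fin n) := by
  rw [sOp_eq, Sop_xv, Equiv.swap_apply_right]

lemma sOp_x_other {n : ℕ} (i : ℕ) (h : i + 1 < n) (j : Fin n)
    (h1 : (j : ℕ) ≠ i) (h2 : (j : ℕ) ≠ i + 1) : sOp i h (xv j) = xv j := by
  rw [sOp_eq, Sop_xv,
    Equiv.swap_apply_of_ne_of_ne (Fin.ne_of_val_ne h1) (Fin.ne_of_val_ne h2)]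

lemma sOp_cv' {n : ℕ} (i : ℕ) (h : i + 1 < n) (c : Qqt) : sOp i h (cv c) = cv c := by
  rw [sOp_eq, Sop_cv]

lemma swap_braid {α : Type*} [DecidableEq α] (A B C : α)
    (hAB : A ≠ B) (hBC : B ≠ C) (hAC : A ≠ C) :
    (Equiv.swap A B).trans ((Equiv.swap B C).trans (Equiv.swap A B)) =
      (Equiv.swap B C).trans ((Equiv.swap A B).trans (Equiv.swap B C)) := by
  show Equiv.swap A B * Equiv.swap B C * Equiv.swap A B =
    Equiv.swap B C * Equiv.swap A B * Equiv.swap B C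
  calc Equiv.swap A B * Equiv.swap B C * Equiv.swap A B
      = Equiv.swap B A * Equiv.swap C B * Equiv.swap B A := by
        rw [Equiv.swap_comm A B, Equiv.swap_comm B C]
    _ = Equiv.swap A C := Equiv.swap_mul_swap_mul_swap hBC.symm hAC.symm
    _ = Equiv.swap C A := Equiv.swap_comm _ _
    _ = Equiv.swap B C * Equiv.swap A B * Equiv.swap B C :=
        (Equiv.swap_mul_swap_mul_swap hAB hAC).symm

lemma swap_trans_comm {α : Type*} [DecidableEq α] {a b c d : α}
    (h1 : a ≠ c) (h2 : a ≠ d) (h3 : b ≠ c) (h4 : b ≠ d) :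
    (Equiv.swap a b).trans (Equiv.swap c d) = (Equiv.swap c d).trans (Equiv.swap a b) := by
  ext x
  simp only [Equiv.trans_apply, Equiv.swap_apply_def]
  split_ifs <;> simp_all

end DLAux

open DLAux in
/-- The Demazure–Lusztig operators satisfy the braid relations:
`T_i T_{i+1} T_i = T_{i+1} T_i T_{i+1}` and `T_i T_j = T_j T_i` for `|i−j| > 1`. -/
theorem demazure_lusztig_braid {n : ℕ} :
    (∀ (i : ℕ) (h : i + 2 < n) (f : KK n),
      TOp i (Nat.lt_of_succ_lt h) (TOp (i + 1) h (TOp i (Nat.lt_of_succ_lt h) f)) =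
        TOp (i + 1) h (TOp i (Nat.lt_of_succ_lt h) (TOp (i + 1) h f))) ∧
    (∀ (i j : ℕ) (hi : i + 1 < n) (hj : j + 1 < n), i + 1 < j ∨ j + 1 < i →
      ∀ f : KK n, TOp i hi (TOp j hj f) = TOp j hj (TOp i hi f)) := by
  constructor
  · intro i h f
    have hbraid : sOp i (Nat.lt_of_succ_lt h) (sOp (i + 1) h (sOp i (Nat.lt_of_succ_lt h) f)) =
        sOp (i + 1) h (sOp i (Nat.lt_of_succ_lt h) (sOp (i + 1) h f)) := by
      rw [sOp_eq i (Nat.lt_of_succ_lt h), sOp_eq (i + 1) h,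
        Sop_comp, Sop_comp, Sop_comp, Sop_comp]
      exact congrArg (fun e => Sop e f)
        (swap_braid _ _ _ (by simp only [ne_eq, Fin.mk.injEq]; omega)
          (by simp only [ne_eq, Fin.mk.injEq]; omega)
          (by simp only [ne_eq, Fin.mk.injEq]; omega))
    exact braid_key (K := KK n) (sOp i (Nat.lt_of_succ_lt h)) (sOp (i + 1) h)
      (xv (⟨i, Nat.lt_of_succ_lt (Nat.lt_of_succ_lt h)⟩ : Fin n))
      (xv (⟨i + 1, Nat.lt_of_succ_lt h⟩ : Fin n))
      (xv (⟨i + 1 + 1, h⟩ : Fin n)) (cv tt)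
      (sOp_x_left i _) (sOp_x_right i _)
      (sOp_x_other i _ _ (show i + 1 + 1 ≠ i by omega) (show i + 1 + 1 ≠ i + 1 by omega))
      (sOp_x_other (i + 1) h _ (show i ≠ i + 1 by omega) (show i ≠ i + 1 + 1 by omega))
      (sOp_x_left (i + 1) h) (sOp_x_right (i + 1) h)
      (sOp_cv' i _ _) (sOp_cv' (i + 1) h _)
      (xv_ne (by simp only [ne_eq, Fin.mk.injEq]; omega))
      (xv_ne (by simp only [ne_eq, Fin.mk.injEq]; omega))
      (xv_ne (by simp only [ne_eq, Fin.mk.injEq]; omega))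
      (sOp_invol i _) (sOp_invol (i + 1) h) f hbraid _ _ (fun g => rfl) (fun g => rfl)
  · intro i j hi hj hij f
    have hcomm : sOp i hi (sOp j hj f) = sOp j hj (sOp i hi f) := by
      rw [sOp_eq i hi, sOp_eq j hj, Sop_comp, Sop_comp]
      exact congrArg (fun e => Sop e f)
        (swap_trans_comm (by simp only [ne_eq, Fin.mk.injEq]; omega)
          (by simp only [ne_eq, Fin.mk.injEq]; omega)
          (by simp only [ne_eq, Fin.mk.injEq]; omega)
          (by simp only [ne_eq, Fin.mk.injEq]; omega))
    exact comm_key (K := KK n) (sOp i hi) (sOp j hj)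
      (xv (⟨i, Nat.lt_of_succ_lt hi⟩ : Fin n)) (xv (⟨i + 1, hi⟩ : Fin n))
      (xv (⟨j, Nat.lt_of_succ_lt hj⟩ : Fin n)) (xv (⟨j + 1, hj⟩ : Fin n)) (cv tt)
      (sOp_x_left i hi) (sOp_x_right i hi)
      (sOp_x_other i hi _ (show j ≠ i by omega) (show j ≠ i + 1 by omega))
      (sOp_x_other i hi _ (show j + 1 ≠ i by omega) (show j + 1 ≠ i + 1 by omega))
      (sOp_x_other j hj _ (show i ≠ j by omega) (show i ≠ j + 1 by omega))
      (sOp_x_other j hj _ (show i + 1 ≠ j by omega) (show i + 1 ≠ j + 1 by omega))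
      (sOp_x_left j hj) (sOp_x_right j hj)
      (sOp_cv' i hi _) (sOp_cv' j hj _)
      (xv_ne (by simp only [ne_eq, Fin.mk.injEq]; omega))
      (xv_ne (by simp only [ne_eq, Fin.mk.injEq]; omega))
      f hcomm _ _ (fun g => rfl) (fun g => rfl)

end
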